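/- For every α ∈ (−1, 1) there exists a constant C > 0, depending only on n and α, such that (∫_0^A ((f(x) − P_n(x)) / x^{n+1+α/2})² dx)^{1/2} ≤ C·(∫_0^A (x^{−α/2}·f^{(n+1)}(x))² dx)^{1/2}. -/

import Mathlib

open MeasureTheory Set

section helpers

lemma swap_Ioo {A : ℝ} {f : ℝ × ℝ → ENNReal} (hf : Measurable f) :
    ∫⁻ x in Set.Ioo (0:ℝ) A, ∫⁻ t in Set.Ioo (0:ℝ) x, f (x, t) =
    ∫⁻ t in Set.Ioo (0:ℝ) A, ∫⁻ x in Set.Ioo t A, f (x, t) := by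
  set s : Set (ℝ × ℝ) := {p | 0 < p.2 ∧ p.2 < p.1 ∧ p.1 < A} with hs_def
  have hs : MeasurableSet s := by
    apply MeasurableSet.inter (measurableSet_lt measurable_const measurable_snd)
    exact (measurableSet_lt measurable_snd measurable_fst).inter
      (measurableSet_lt measurable_fst measurable_const)
  have key : ∀ x : ℝ, (Set.Ioo (0:ℝ) A).indicator
      (fun x => ∫⁻ t in Set.Ioo (0:ℝ) x, f (x, t)) x = ∫⁻ t, s.indicator f (x, t) := by
    intro x
    by_cases hx : x ∈ Set.Ioo (0:ℝ) A
    · rw [Set.indicator_of_mem hx, ← lintegral_indicator measurableSet_Ioo]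
      congr 1
      ext t
      by_cases ht : t ∈ Set.Ioo (0:ℝ) x
      · rw [Set.indicator_of_mem ht, Set.indicator_of_mem]
        exact ⟨ht.1, ht.2, hx.2⟩
      · rw [Set.indicator_of_notMem ht, Set.indicator_of_notMem]
        intro hmem
        exact ht ⟨hmem.1, hmem.2.1⟩
    · rw [Set.indicator_of_notMem hx]
      symm
      have : ∀ t : ℝ, s.indicator f (x, t) = 0 := by
        intro t
        apply Set.indicator_of_notMem
        intro hmem
        exact hx ⟨lt_trans hmem.1 hmem.2.1, hmem.2.2⟩
      simp only [this, lintegral_zero]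
  have key2 : ∀ t : ℝ, (Set.Ioo (0:ℝ) A).indicator
      (fun t => ∫⁻ x in Set.Ioo t A, f (x, t)) t = ∫⁻ x, s.indicator f (x, t) := by
    intro t
    by_cases ht : t ∈ Set.Ioo (0:ℝ) A
    · rw [Set.indicator_of_mem ht, ← lintegral_indicator measurableSet_Ioo]
      congr 1
      ext x
      by_cases hx : x ∈ Set.Ioo t A
      · rw [Set.indicator_of_mem hx, Set.indicator_of_mem]
        exact ⟨ht.1, hx.1, hx.2⟩
      · rw [Set.indicator_of_notMem hx, Set.indicator_of_notMem]
        intro hmem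
        exact hx ⟨hmem.2.1, hmem.2.2⟩
    · rw [Set.indicator_of_notMem ht]
      symm
      have : ∀ x : ℝ, s.indicator f (x, t) = 0 := by
        intro x
        apply Set.indicator_of_notMem
        intro hmem
        exact ht ⟨hmem.1, lt_trans hmem.2.1 hmem.2.2⟩
      simp only [this, lintegral_zero]
  calc ∫⁻ x in Set.Ioo (0:ℝ) A, ∫⁻ t in Set.Ioo (0:ℝ) x, f (x, t)
      = ∫⁻ x, (Set.Ioo (0:ℝ) A).indicator (fun x => ∫⁻ t in Set.Ioo (0:ℝ) x, f (x, t)) x := by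
        rw [lintegral_indicator measurableSet_Ioo]
    _ = ∫⁻ x, ∫⁻ t, s.indicator f (x, t) := by exact lintegral_congr key
    _ = ∫⁻ t, ∫⁻ x, s.indicator f (x, t) := by
        apply lintegral_lintegral_swap
        exact (hf.indicator hs).aemeasurable
    _ = ∫⁻ t, (Set.Ioo (0:ℝ) A).indicator (fun t => ∫⁻ x in Set.Ioo t A, f (x, t)) t := by
        exact lintegral_congr fun t => (key2 t).symm
    _ = ∫⁻ t in Set.Ioo (0:ℝ) A, ∫⁻ x in Set.Ioo t A, f (x, t) := by
        rw [lintegral_indicator measurableSet_Ioo]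

lemma remainder_bound {n : ℕ} {A x : ℝ} (hA : 0 < A) {f : ℝ → ℝ}
    (hf : ContDiffOn ℝ (n + 1) f (Set.Icc 0 A)) (hx : x ∈ Set.Ioc (0:ℝ) A) :
    |f x - taylorWithinEval f n (Set.Icc 0 A) 0 x| ≤
      x ^ n / n.factorial *
        ∫ t in Set.Ioo (0:ℝ) x, |iteratedDerivWithin (n + 1) f (Set.Icc 0 A) t| := by
  set g : ℝ → ℝ := iteratedDerivWithin (n + 1) f (Set.Icc 0 A) with hg_def
  have hg : ContinuousOn g (Set.Icc 0 A) :=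
    hf.continuousOn_iteratedDerivWithin le_rfl (uniqueDiffOn_Icc hA)
  have hsub : Set.Icc (0:ℝ) x ⊆ Set.Icc 0 A := Set.Icc_subset_Icc le_rfl hx.2
  have hderiv : ∀ t ∈ Set.Ioo (0:ℝ) x,
      HasDerivAt (fun y => taylorWithinEval f n (Set.Icc 0 A) y x)
        (((n.factorial : ℝ)⁻¹ * (x - t) ^ n) • g t) t := by
    intro t ht
    apply taylorWithinEval_hasDerivAt_Ioo x hA ⟨ht.1, lt_of_lt_of_le ht.2 hx.2⟩
      (hf.of_le (by exact_mod_cast Nat.le_succ n))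
    exact (hf.differentiableOn_iteratedDerivWithin (by exact_mod_cast Nat.lt_succ_self n)
      (uniqueDiffOn_Icc hA)).mono Set.Ioo_subset_Icc_self
  have hcont : ContinuousOn (fun y => taylorWithinEval f n (Set.Icc 0 A) y x) (Set.Icc 0 x) :=
    (continuousOn_taylorWithinEval (uniqueDiffOn_Icc hA)
      (hf.of_le (by exact_mod_cast Nat.le_succ n))).mono hsub
  have hint : IntervalIntegrable (fun t => ((n.factorial : ℝ)⁻¹ * (x - t) ^ n) • g t)
      volume 0 x := by
    apply ContinuousOn.intervalIntegrable
    rw [Set.uIcc_of_le hx.1.le]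
    exact (continuousOn_const.mul ((continuousOn_const.sub continuousOn_id).pow n)).smul
      (hg.mono hsub)
  have hftc := intervalIntegral.integral_eq_sub_of_hasDerivAt_of_le hx.1.le hcont hderiv hint
  rw [taylorWithinEval_self] at hftc
  have heq : f x - taylorWithinEval f n (Set.Icc 0 A) 0 x =
      ∫ t in (0:ℝ)..x, ((n.factorial : ℝ)⁻¹ * (x - t) ^ n) • g t := hftc.symm
  rw [heq]
  have habs : |∫ t in (0:ℝ)..x, ((n.factorial : ℝ)⁻¹ * (x - t) ^ n) • g t| ≤
      ∫ t in (0:ℝ)..x, x ^ n / n.factorial * |g t| := by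
    refine (intervalIntegral.abs_integral_le_integral_abs hx.1.le).trans ?_
    apply intervalIntegral.integral_mono_on hx.1.le hint.abs
    · apply ContinuousOn.intervalIntegrable
      rw [Set.uIcc_of_le hx.1.le]
      exact continuousOn_const.mul (hg.mono hsub).abs
    · intro t ht
      rw [smul_eq_mul, abs_mul, abs_mul]
      have h1 : |(n.factorial : ℝ)⁻¹| = (n.factorial : ℝ)⁻¹ := by
        rw [abs_of_nonneg]; positivity
      have h2 : |(x - t) ^ n| ≤ x ^ n := by
        rw [abs_pow]
        apply pow_le_pow_left₀ (abs_nonneg _)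
        rw [abs_of_nonneg (by linarith [ht.2] : (0:ℝ) ≤ x - t)]
        linarith [ht.1]
      rw [h1, div_eq_inv_mul, mul_assoc]
      have := mul_le_mul_of_nonneg_right h2 (abs_nonneg (g t))
      nlinarith [abs_nonneg (g t), inv_nonneg.mpr (Nat.cast_nonneg n.factorial : (0:ℝ) ≤ n.factorial)]
  refine habs.trans_eq ?_
  rw [intervalIntegral.integral_const_mul, intervalIntegral.integral_of_le hx.1.le,
    MeasureTheory.integral_Ioc_eq_integral_Ioo]

lemma lint_rpow_zero {x p : ℝ} (hx : 0 < x) (hp : -1 < p) :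
    ∫⁻ t in Set.Ioo (0:ℝ) x, ENNReal.ofReal (t ^ p) =
      ENNReal.ofReal (x ^ (p + 1) / (p + 1)) := by
  have hint : IntegrableOn (fun t : ℝ => t ^ p) (Set.Ioo 0 x) volume := by
    have := intervalIntegral.intervalIntegrable_rpow' (a := 0) (b := x) hp
    rw [intervalIntegrable_iff_integrableOn_Ioo_of_le hx.le] at this
    exact this
  rw [← ofReal_integral_eq_lintegral_ofReal hint]
  · congr 1
    rw [← MeasureTheory.integral_Ioc_eq_integral_Ioo,
      ← intervalIntegral.integral_of_le hx.le, integral_rpow (Or.inl hp)]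
    rw [Real.zero_rpow (by linarith : p + 1 ≠ 0)]
    ring
  · filter_upwards [ae_restrict_mem measurableSet_Ioo] with t ht
    exact Real.rpow_nonneg ht.1.le _

lemma lint_rpow_tail {t A p : ℝ} (ht : 0 < t) (hp : p < -1) :
    ∫⁻ x in Set.Ioo t A, ENNReal.ofReal (x ^ p) ≤
      ENNReal.ofReal (t ^ (p + 1) / (-(p + 1))) := by
  rcases le_or_gt A t with hAt | htA
  · rw [Set.Ioo_eq_empty (by exact fun h => absurd hAt (not_le.mpr h))]
    simp
  · have hint : IntegrableOn (fun x : ℝ => x ^ p) (Set.Ioo t A) volume := by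
      have h0 : (0:ℝ) ∉ Set.uIcc t A := by
        rw [Set.uIcc_of_le htA.le]
        intro h
        exact absurd h.1 (not_le.mpr ht)
      have := intervalIntegral.intervalIntegrable_rpow (a := t) (b := A) (r := p) (μ := volume) (Or.inr h0)
      rw [intervalIntegrable_iff_integrableOn_Ioo_of_le htA.le] at this
      exact this
    rw [← ofReal_integral_eq_lintegral_ofReal hint]
    · apply ENNReal.ofReal_le_ofReal
      rw [← MeasureTheory.integral_Ioc_eq_integral_Ioo,
        ← intervalIntegral.integral_of_le htA.le,
        integral_rpow (Or.inr ⟨by linarith, by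
          rw [Set.uIcc_of_le htA.le]; intro h; exact absurd h.1 (not_le.mpr ht)⟩)]
      have hA1 : (0:ℝ) ≤ A ^ (p + 1) := Real.rpow_nonneg (by linarith) _
      have hp1 : p + 1 < 0 := by linarith
      have htp : (0:ℝ) ≤ t ^ (p + 1) := Real.rpow_nonneg ht.le _
      have hne : -(p+1) > 0 := by linarith
      have heq2 : (A ^ (p + 1) - t ^ (p + 1)) / (p + 1) = (t ^ (p+1) - A ^ (p+1)) / (-(p+1)) := by
        rw [div_neg]
        ring
      rw [heq2]
      gcongr
      all_goals linarith
    · filter_upwards [ae_restrict_mem measurableSet_Ioo] with x hx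
      exact Real.rpow_nonneg (le_trans ht.le hx.1.le) _

lemma lintegral_mul_sq {μ : Measure ℝ} {F1 F2 : ℝ → ENNReal}
    (h1 : AEMeasurable F1 μ) (h2 : AEMeasurable F2 μ) :
    (∫⁻ t, F1 t * F2 t ∂μ) ^ 2 ≤ (∫⁻ t, F1 t ^ 2 ∂μ) * ∫⁻ t, F2 t ^ 2 ∂μ := by
  have hpq : Real.HolderConjugate 2 2 := by
    constructor <;> norm_num
  have := ENNReal.lintegral_mul_le_Lp_mul_Lq μ hpq h1 h2
  simp only [Pi.mul_apply] at this
  calc (∫⁻ t, F1 t * F2 t ∂μ) ^ 2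
      ≤ ((∫⁻ t, F1 t ^ (2:ℝ) ∂μ) ^ (1/2:ℝ) * (∫⁻ t, F2 t ^ (2:ℝ) ∂μ) ^ (1/2:ℝ)) ^ 2 := by
        exact pow_le_pow_left' this 2
    _ = (∫⁻ t, F1 t ^ 2 ∂μ) * ∫⁻ t, F2 t ^ 2 ∂μ := by
        rw [mul_pow, ← ENNReal.rpow_natCast (_ ^ (1/2:ℝ)) 2, ← ENNReal.rpow_natCast (_ ^ (1/2:ℝ)) 2,
          ← ENNReal.rpow_mul, ← ENNReal.rpow_mul]
        norm_num

lemma meas_ofReal_rpow (c : ℝ) : Measurable fun x : ℝ => ENNReal.ofReal (x ^ c) := by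
  measurability

end helpers

/-- Taylor expansion in `L²`: weighted `L²` remainder estimate. -/
theorem taylor_L2_remainder (n : ℕ) (α : ℝ) (hα : α ∈ Set.Ioo (-1 : ℝ) 1) :
    ∃ C > 0, ∀ (A : ℝ), 0 < A → ∀ f : ℝ → ℝ,
      ContDiffOn ℝ (n + 1) f (Set.Icc 0 A) →
      (∫⁻ x in Set.Ioo (0 : ℝ) A,
          ENNReal.ofReal (((f x - ∑ k ∈ Finset.range (n + 1),
              x ^ k / (k.factorial : ℝ) * iteratedDerivWithin k f (Set.Icc 0 A) 0)
            / x ^ ((n : ℝ) + 1 + α / 2)) ^ 2)) ^ (1 / 2 : ℝ)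
        ≤ ENNReal.ofReal C *
          (∫⁻ x in Set.Ioo (0 : ℝ) A,
            ENNReal.ofReal ((x ^ (-α / 2) *
              iteratedDerivWithin (n + 1) f (Set.Icc 0 A) x) ^ 2)) ^ (1 / 2 : ℝ) := by
  obtain ⟨hα1, hα2⟩ := hα
  have hfac : (0:ℝ) < n.factorial := by exact_mod_cast n.factorial_pos
  have h1α : (0:ℝ) < 1 + α := by linarith
  set C : ℝ := 2 / (n.factorial * (1 + α)) with hC_def
  have hC : 0 < C := by positivity
  refine ⟨C, hC, ?_⟩
  intro A hA f hf
  -- notation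
  set g : ℝ → ℝ := iteratedDerivWithin (n + 1) f (Set.Icc 0 A) with hg_def
  have hg : ContinuousOn g (Set.Icc 0 A) :=
    hf.continuousOn_iteratedDerivWithin le_rfl (uniqueDiffOn_Icc hA)
  have hgae : AEMeasurable g (volume.restrict (Set.Ioo 0 A)) :=
    (hg.mono Set.Ioo_subset_Icc_self).aemeasurable measurableSet_Ioo
  set h : ℝ → ℝ := hgae.mk g with hh_def
  have hmeas : Measurable h := hgae.measurable_mk
  have hgh : g =ᵐ[volume.restrict (Set.Ioo 0 A)] h := hgae.ae_eq_mk
  set G : ℝ → ENNReal := fun t => ENNReal.ofReal |h t| with hG_def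
  have hG : Measurable G := hmeas.abs.ennreal_ofReal
  -- exponents
  set q : ℝ := (1 - α) / 2 with hq_def
  set p : ℝ := (-3 - α) / 2 with hp_def
  have h1q : 1 - q = (1 + α) / 2 := by rw [hq_def]; ring
  have hql : -1 < -q := by rw [hq_def]; linarith
  have hpl : p < -1 := by rw [hp_def]; linarith
  have hp1pos : (0:ℝ) < -(p + 1) := by rw [hp_def]; linarith
  -- Taylor polynomial identification
  have hP : ∀ x : ℝ, (∑ k ∈ Finset.range (n + 1),
      x ^ k / (k.factorial : ℝ) * iteratedDerivWithin k f (Set.Icc 0 A) 0) =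
      taylorWithinEval f n (Set.Icc 0 A) 0 x := by
    intro x
    rw [taylor_within_apply]
    refine Finset.sum_congr rfl fun k _ => ?_
    rw [smul_eq_mul, sub_zero]
    ring
  -- abbreviations for the two integrals
  set J : ENNReal := ∫⁻ t in Set.Ioo (0:ℝ) A, ENNReal.ofReal (t ^ (-α)) * G t ^ 2 with hJ_def
  have hRHS : (∫⁻ x in Set.Ioo (0 : ℝ) A,
      ENNReal.ofReal ((x ^ (-α / 2) * g x) ^ 2)) = J := by
    rw [hJ_def]
    apply lintegral_congr_ae
    filter_upwards [hgh, ae_restrict_mem measurableSet_Ioo] with x hx1 hx2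
    have hx0 : (0:ℝ) < x := hx2.1
    have hsq : (x ^ (-α / 2)) ^ 2 = x ^ (-α) := by
      rw [← Real.rpow_natCast (x ^ (-α/2)) 2, ← Real.rpow_mul hx0.le]
      norm_num
    rw [mul_pow, hsq, ENNReal.ofReal_mul (Real.rpow_nonneg hx0.le _)]
    congr 1
    rw [hG_def, ← ENNReal.ofReal_pow (abs_nonneg _), ← hx1, sq_abs]
  -- the inner Cauchy-Schwarz + remainder pointwise bound
  set K : ℝ → ENNReal := fun x => ∫⁻ t in Set.Ioo (0:ℝ) x, ENNReal.ofReal (t ^ q) * G t ^ 2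
    with hK_def
  set c2 : ℝ := ((n.factorial : ℝ)⁻¹) ^ 2 * (1 - q)⁻¹ with hc2_def
  have hc2 : 0 < c2 := by rw [hc2_def, h1q]; positivity
  have key : ∀ x ∈ Set.Ioo (0:ℝ) A,
      ENNReal.ofReal (((f x - taylorWithinEval f n (Set.Icc 0 A) 0 x)
          / x ^ ((n : ℝ) + 1 + α / 2)) ^ 2)
        ≤ ENNReal.ofReal c2 * (ENNReal.ofReal (x ^ p) * K x) := by
    intro x hx
    have hx0 : (0:ℝ) < x := hx.1
    have hxA : x ≤ A := hx.2.le
    -- remainder bound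
    set R : ℝ := ∫ t in Set.Ioo (0:ℝ) x, |g t| with hR_def
    have hR0 : 0 ≤ R := integral_nonneg fun t => abs_nonneg _
    have hrem : |f x - taylorWithinEval f n (Set.Icc 0 A) 0 x| ≤
        x ^ n / n.factorial * R := remainder_bound hA hf ⟨hx0, hxA⟩
    -- step A : real estimate
    have hA1 : ((f x - taylorWithinEval f n (Set.Icc 0 A) 0 x)
          / x ^ ((n : ℝ) + 1 + α / 2)) ^ 2 ≤
        ((n.factorial : ℝ)⁻¹) ^ 2 * x ^ (-2 - α) * R ^ 2 := by
      have hxe : (0:ℝ) < x ^ ((n : ℝ) + 1 + α / 2) := Real.rpow_pos_of_pos hx0 _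
      rw [div_pow]
      rw [div_le_iff₀ (by positivity)]
      have hnum : (f x - taylorWithinEval f n (Set.Icc 0 A) 0 x) ^ 2 ≤
          (x ^ n / n.factorial * R) ^ 2 := by
        rw [← sq_abs]
        exact pow_le_pow_left₀ (abs_nonneg _) hrem 2
      refine hnum.trans_eq ?_
      rw [mul_pow, div_pow]
      have hxx : (x ^ ((n : ℝ) + 1 + α / 2)) ^ 2 = x ^ (2 * ((n : ℝ) + 1 + α / 2)) := by
        rw [← Real.rpow_natCast (x ^ _) 2, ← Real.rpow_mul hx0.le]
        ring_nf
      have hxn : (x ^ n) ^ 2 = x ^ ((2 * n : ℕ) : ℝ) := by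
        rw [Real.rpow_natCast, ← pow_mul, mul_comm]
      have hcomb : x ^ ((2 * n : ℕ) : ℝ) = x ^ (-2 - α) * x ^ (2 * ((n : ℝ) + 1 + α / 2)) := by
        rw [← Real.rpow_add hx0]
        congr 1
        push_cast
        ring
      rw [hxn, hcomb, hxx]
      ring
    -- step B : ofReal R ≤ lintegral of G
    have hB : ENNReal.ofReal R ≤ ∫⁻ t in Set.Ioo (0:ℝ) x, G t := by
      have hgint : IntegrableOn (fun t => |g t|) (Set.Ioo (0:ℝ) x) volume := by
        apply ContinuousOn.integrableOn_Icc (by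
          exact (hg.mono (Set.Icc_subset_Icc le_rfl hxA)).abs) |>.mono_set Set.Ioo_subset_Icc_self
      rw [hR_def, ofReal_integral_eq_lintegral_ofReal hgint
        (Filter.Eventually.of_forall fun t => abs_nonneg _)]
      apply le_of_eq
      apply lintegral_congr_ae
      have hgh' : g =ᵐ[volume.restrict (Set.Ioo 0 x)] h :=
        ae_restrict_of_ae_restrict_of_subset (Set.Ioo_subset_Ioo le_rfl hxA) hgh
      filter_upwards [hgh'] with t ht
      rw [hG_def, ht]
    -- step C : Cauchy-Schwarz
    have hC1 : (∫⁻ t in Set.Ioo (0:ℝ) x, G t) ^ 2 ≤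
        ENNReal.ofReal (x ^ (1 - q) / (1 - q)) * K x := by
      set F1 : ℝ → ENNReal := fun t => ENNReal.ofReal (t ^ (-q/2)) with hF1_def
      set F2 : ℝ → ENNReal := fun t => ENNReal.ofReal (t ^ (q/2)) * G t with hF2_def
      have hF1m : Measurable F1 := meas_ofReal_rpow _
      have hF2m : Measurable F2 := (meas_ofReal_rpow _).mul hG
      have heqG : ∫⁻ t in Set.Ioo (0:ℝ) x, G t =
          ∫⁻ t in Set.Ioo (0:ℝ) x, F1 t * F2 t := by
        apply lintegral_congr_ae
        filter_upwards [ae_restrict_mem measurableSet_Ioo] with t ht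
        rw [hF1_def, hF2_def, ← mul_assoc, ← ENNReal.ofReal_mul (Real.rpow_nonneg ht.1.le _),
          ← Real.rpow_add ht.1, show -q/2 + q/2 = 0 by ring, Real.rpow_zero,
          ENNReal.ofReal_one, one_mul]
      have hF1sq : ∫⁻ t in Set.Ioo (0:ℝ) x, F1 t ^ 2 =
          ENNReal.ofReal (x ^ (1 - q) / (1 - q)) := by
        have : ∫⁻ t in Set.Ioo (0:ℝ) x, F1 t ^ 2 =
            ∫⁻ t in Set.Ioo (0:ℝ) x, ENNReal.ofReal (t ^ (-q)) := by
          apply lintegral_congr_ae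
          filter_upwards [ae_restrict_mem measurableSet_Ioo] with t ht
          rw [hF1_def, ← ENNReal.ofReal_pow (Real.rpow_nonneg ht.1.le _),
            ← Real.rpow_natCast (t ^ _) 2, ← Real.rpow_mul ht.1.le]
          norm_num
        rw [this, lint_rpow_zero hx0 hql]
        congr 2 <;> ring
      have hF2sq : ∫⁻ t in Set.Ioo (0:ℝ) x, F2 t ^ 2 = K x := by
        rw [hK_def]
        apply lintegral_congr_ae
        filter_upwards [ae_restrict_mem measurableSet_Ioo] with t ht
        rw [hF2_def, mul_pow, ← ENNReal.ofReal_pow (Real.rpow_nonneg ht.1.le _),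
          ← Real.rpow_natCast (t ^ _) 2, ← Real.rpow_mul ht.1.le]
        norm_num
      rw [heqG, ← hF1sq, ← hF2sq]
      exact lintegral_mul_sq hF1m.aemeasurable hF2m.aemeasurable
    -- combine
    calc ENNReal.ofReal (((f x - taylorWithinEval f n (Set.Icc 0 A) 0 x)
          / x ^ ((n : ℝ) + 1 + α / 2)) ^ 2)
        ≤ ENNReal.ofReal (((n.factorial : ℝ)⁻¹) ^ 2 * x ^ (-2 - α) * R ^ 2) :=
          ENNReal.ofReal_le_ofReal hA1
      _ = ENNReal.ofReal (((n.factorial : ℝ)⁻¹) ^ 2 * x ^ (-2 - α)) * ENNReal.ofReal R ^ 2 := by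
          rw [ENNReal.ofReal_mul (by positivity), ENNReal.ofReal_pow hR0]
      _ ≤ ENNReal.ofReal (((n.factorial : ℝ)⁻¹) ^ 2 * x ^ (-2 - α)) *
            (∫⁻ t in Set.Ioo (0:ℝ) x, G t) ^ 2 := by
          gcongr
      _ ≤ ENNReal.ofReal (((n.factorial : ℝ)⁻¹) ^ 2 * x ^ (-2 - α)) *
            (ENNReal.ofReal (x ^ (1 - q) / (1 - q)) * K x) := by
          gcongr
      _ = ENNReal.ofReal c2 * (ENNReal.ofReal (x ^ p) * K x) := by
          rw [← mul_assoc, ← mul_assoc, ← ENNReal.ofReal_mul (by positivity),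
            ← ENNReal.ofReal_mul (by positivity)]
          congr 2
          have hxp : x ^ (-2 - α) * x ^ (1 - q) = x ^ p := by
            rw [← Real.rpow_add hx0]
            congr 1
            rw [hp_def, hq_def]
            ring
          rw [hc2_def, div_eq_mul_inv]
          linear_combination ((n.factorial : ℝ)⁻¹ ^ 2 * (1 - q)⁻¹) * hxp
  -- now the global chain
  set I : ENNReal := ∫⁻ x in Set.Ioo (0:ℝ) A,
      ENNReal.ofReal (((f x - taylorWithinEval f n (Set.Icc 0 A) 0 x)
        / x ^ ((n : ℝ) + 1 + α / 2)) ^ 2) with hI_def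
  have hmain : I ≤ ENNReal.ofReal (C ^ 2) * J := by
    have step1 : I ≤ ENNReal.ofReal c2 * ∫⁻ x in Set.Ioo (0:ℝ) A,
        ENNReal.ofReal (x ^ p) * K x := by
      rw [hI_def, ← lintegral_const_mul' _ _ ENNReal.ofReal_ne_top]
      apply lintegral_mono_ae
      filter_upwards [ae_restrict_mem measurableSet_Ioo] with x hx
      exact key x hx
    have step2 : (∫⁻ x in Set.Ioo (0:ℝ) A, ENNReal.ofReal (x ^ p) * K x) =
        ∫⁻ t in Set.Ioo (0:ℝ) A,
          (∫⁻ x in Set.Ioo t A, ENNReal.ofReal (x ^ p)) * (ENNReal.ofReal (t ^ q) * G t ^ 2) := by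
      have hswap := swap_Ioo (A := A)
        (f := fun pr : ℝ × ℝ => ENNReal.ofReal (pr.1 ^ p) *
          (ENNReal.ofReal (pr.2 ^ q) * G pr.2 ^ 2))
          (((meas_ofReal_rpow p).comp measurable_fst).mul
            (((meas_ofReal_rpow q).comp measurable_snd).mul
              ((hG.comp measurable_snd).pow_const 2)))
      calc (∫⁻ x in Set.Ioo (0:ℝ) A, ENNReal.ofReal (x ^ p) * K x)
          = ∫⁻ x in Set.Ioo (0:ℝ) A, ∫⁻ t in Set.Ioo (0:ℝ) x,
              ENNReal.ofReal (x ^ p) * (ENNReal.ofReal (t ^ q) * G t ^ 2) := by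
            apply lintegral_congr fun x => ?_
            rw [hK_def, ← lintegral_const_mul' _ _ ENNReal.ofReal_ne_top]
        _ = ∫⁻ t in Set.Ioo (0:ℝ) A, ∫⁻ x in Set.Ioo t A,
              ENNReal.ofReal (x ^ p) * (ENNReal.ofReal (t ^ q) * G t ^ 2) := hswap
        _ = ∫⁻ t in Set.Ioo (0:ℝ) A,
              (∫⁻ x in Set.Ioo t A, ENNReal.ofReal (x ^ p)) *
                (ENNReal.ofReal (t ^ q) * G t ^ 2) := by
            apply lintegral_congr fun t => ?_
            rw [lintegral_mul_const' _ _ (by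
              exact ENNReal.mul_ne_top ENNReal.ofReal_ne_top
                (by exact ENNReal.pow_ne_top ENNReal.ofReal_ne_top))]
    have step3 : (∫⁻ t in Set.Ioo (0:ℝ) A,
          (∫⁻ x in Set.Ioo t A, ENNReal.ofReal (x ^ p)) * (ENNReal.ofReal (t ^ q) * G t ^ 2))
        ≤ ENNReal.ofReal ((-(p+1))⁻¹) * J := by
      rw [hJ_def, ← lintegral_const_mul' _ _ ENNReal.ofReal_ne_top]
      apply lintegral_mono_ae
      filter_upwards [ae_restrict_mem measurableSet_Ioo] with t ht
      calc (∫⁻ x in Set.Ioo t A, ENNReal.ofReal (x ^ p)) * (ENNReal.ofReal (t ^ q) * G t ^ 2)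
          ≤ ENNReal.ofReal (t ^ (p+1) / (-(p+1))) * (ENNReal.ofReal (t ^ q) * G t ^ 2) := by
            gcongr
            exact lint_rpow_tail ht.1 hpl
        _ = ENNReal.ofReal ((-(p+1))⁻¹) * (ENNReal.ofReal (t ^ (-α)) * G t ^ 2) := by
            have hsplit : ENNReal.ofReal (t ^ (p+1) / (-(p+1))) =
                ENNReal.ofReal ((-(p+1))⁻¹) * ENNReal.ofReal (t ^ (p+1)) := by
              rw [div_eq_inv_mul, ENNReal.ofReal_mul (inv_nonneg.mpr hp1pos.le)]
            have hmul : ENNReal.ofReal (t ^ (p+1)) * ENNReal.ofReal (t ^ q) =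
                ENNReal.ofReal (t ^ (-α)) := by
              rw [← ENNReal.ofReal_mul (Real.rpow_nonneg ht.1.le _), ← Real.rpow_add ht.1]
              congr 1
              rw [hp_def, hq_def]
              ring
            rw [hsplit, mul_assoc, ← mul_assoc (ENNReal.ofReal (t ^ (p+1))), hmul]
    calc I ≤ ENNReal.ofReal c2 * ∫⁻ x in Set.Ioo (0:ℝ) A, ENNReal.ofReal (x ^ p) * K x := step1
      _ = ENNReal.ofReal c2 * ∫⁻ t in Set.Ioo (0:ℝ) A,
            (∫⁻ x in Set.Ioo t A, ENNReal.ofReal (x ^ p)) *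
              (ENNReal.ofReal (t ^ q) * G t ^ 2) := by rw [step2]
      _ ≤ ENNReal.ofReal c2 * (ENNReal.ofReal ((-(p+1))⁻¹) * J) := by gcongr
      _ = ENNReal.ofReal (C ^ 2) * J := by
          rw [← mul_assoc, ← ENNReal.ofReal_mul hc2.le]
          congr 2
          rw [hc2_def, hC_def, h1q, hp_def]
          rw [show -((-3 - α) / 2 + 1) = (1 + α) / 2 by ring]
          rw [div_pow]
          field_simp
  -- wrap up
  have hPle : (∫⁻ x in Set.Ioo (0 : ℝ) A,
      ENNReal.ofReal (((f x - ∑ k ∈ Finset.range (n + 1),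
          x ^ k / (k.factorial : ℝ) * iteratedDerivWithin k f (Set.Icc 0 A) 0)
        / x ^ ((n : ℝ) + 1 + α / 2)) ^ 2)) = I := by
    rw [hI_def]
    apply lintegral_congr fun x => ?_
    rw [hP x]
  rw [hPle, hRHS]
  calc I ^ (1/2 : ℝ) ≤ (ENNReal.ofReal (C ^ 2) * J) ^ (1/2 : ℝ) := by
        exact ENNReal.rpow_le_rpow hmain (by norm_num)
    _ = ENNReal.ofReal C * J ^ (1/2 : ℝ) := by
        rw [ENNReal.mul_rpow_of_nonneg _ _ (by norm_num)]
        congr 1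
        rw [show (C ^ 2 : ℝ) = C ^ (2:ℝ) by
          rw [← Real.rpow_natCast C 2]; norm_num]
        rw [← ENNReal.ofReal_rpow_of_pos hC, ← ENNReal.rpow_mul]
        norm_num
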